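/- Let X be a complex Banach space, A a positive operator on X, and α ∈ (0,1). Then the Bochner integral ∫₀^∞ s^{-α} (s+A)^{-2} ds converges in L(X) and (sin(πα)/π) ∫₀^∞ s^{-α} (s+A)^{-2} ds = α · A^{-1} ∘ A^{-α}, where A^{-1} = (0+A)^{-1} and A^{-α} = (sin(πα)/π) ∫₀^∞ s^{-α}(s+A)^{-1} ds. -/

import Mathlib

open MeasureTheory Real Set

noncomputable section

/-- `R` is a two-sided bounded inverse of `lam + A : D(A) → X`;
in particular `lam + A` is bijective from `D(A)` onto `X` with bounded inverse `R`. -/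
def ResolventAt {X : Type*} [NormedAddCommGroup X] [NormedSpace ℂ X]
    (A : X →ₗ.[ℂ] X) (lam : ℂ) (R : X →L[ℂ] X) : Prop :=
  (∀ x : A.domain, R (lam • (x : X) + A x) = x) ∧
  (∀ y : X, ∃ h : R y ∈ A.domain, lam • R y + A ⟨R y, h⟩ = y)

/-- `A` is a positive operator with constant `M ≥ 1` and resolvent family `R`. -/
structure IsPositive {X : Type*} [NormedAddCommGroup X] [NormedSpace ℂ X]
    (A : X →ₗ.[ℂ] X) (M : ℝ) (R : ℝ → X →L[ℂ] X) : Prop where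
  dense_domain : Dense (A.domain : Set X)
  closed_graph : IsClosed (A.graph : Set (X × X))
  one_le : 1 ≤ M
  resolvent : ∀ s : ℝ, 0 ≤ s → ResolventAt A (s : ℂ) (R s)
  bound : ∀ s : ℝ, 0 ≤ s → (1 + s) * ‖R s‖ ≤ M

/-- The Balakrishnan fractional power `A ^ (-α)`, expressed through the
resolvent family `R` of `A`:  `A⁻ᵅ = (sin (π α) / π) ∫₀^∞ s⁻ᵅ (s+A)⁻¹ ds`. -/
def negPow {X : Type*} [NormedAddCommGroup X] [NormedSpace ℂ X]
    (R : ℝ → X →L[ℂ] X) (α : ℝ) : X →L[ℂ] X :=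
  (Real.sin (π * α) / π) • ∫ s in Ioi (0 : ℝ), s ^ (-α) • R s

set_option maxHeartbeats 1000000
set_option synthInstance.maxHeartbeats 400000

namespace Stmt8Aux

variable {X : Type*} [NormedAddCommGroup X] [NormedSpace ℂ X]
variable {M : ℝ} {A : X →ₗ.[ℂ] X} {R : ℝ → X →L[ℂ] X}

lemma res_id (hA : IsPositive A M R) {s t : ℝ} (hs : 0 ≤ s) (ht : 0 ≤ t) :
    R s - R t = (t - s) • ((R s).comp (R t)) := by
  ext y
  obtain ⟨hmem, heq⟩ := (hA.resolvent t ht).2 y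
  set v := R t y with hv
  have hleft := (hA.resolvent s hs).1 ⟨v, hmem⟩
  have hval : (s : ℂ) • v + A ⟨v, hmem⟩ = ((s : ℂ) - t) • v + y := by
    rw [← heq, sub_smul]; abel
  rw [hval] at hleft
  rw [map_add, ContinuousLinearMap.map_smul] at hleft
  simp only [Submodule.coe_mk] at hleft
  have h2 : R s y = v - ((s : ℂ) - t) • R s v := eq_sub_of_add_eq' hleft
  simp only [ContinuousLinearMap.coe_sub', Pi.sub_apply, ContinuousLinearMap.coe_smul',
    Pi.smul_apply, ContinuousLinearMap.coe_comp', Function.comp_apply]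
  rw [← Complex.coe_smul, Complex.ofReal_sub, ← hv, h2, sub_sub_cancel_left, ← neg_smul,
    neg_sub]

lemma norm_R_le_div (hA : IsPositive A M R) {s : ℝ} (hs : 0 ≤ s) : ‖R s‖ ≤ M / (1 + s) := by
  have h1 : (0:ℝ) < 1 + s := by linarith
  rw [le_div_iff₀ h1, mul_comm]
  exact hA.bound s hs

lemma norm_R_le (hA : IsPositive A M R) {s : ℝ} (hs : 0 ≤ s) : ‖R s‖ ≤ M := by
  refine (norm_R_le_div hA hs).trans ?_
  have hM : (0:ℝ) < M := lt_of_lt_of_le one_pos hA.one_le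
  rw [div_le_iff₀ (by linarith : (0:ℝ) < 1 + s)]
  nlinarith

lemma comm (hA : IsPositive A M R) {s t : ℝ} (hs : 0 ≤ s) (ht : 0 ≤ t) (hne : s ≠ t) :
    (R s).comp (R t) = (R t).comp (R s) := by
  have h1 := res_id hA hs ht
  have h2 := res_id hA ht hs
  have : (t - s) • ((R s).comp (R t)) = (t - s) • ((R t).comp (R s)) := by
    rw [← h1]
    have := congrArg Neg.neg h2
    rw [neg_sub, ← neg_smul, neg_sub] at this
    exact this
  exact smul_right_injective _ (sub_ne_zero.mpr (Ne.symm hne)) this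

lemma norm_sub (hA : IsPositive A M R) {s t : ℝ} (hs : 0 ≤ s) (ht : 0 ≤ t) :
    ‖R s - R t‖ ≤ M ^ 2 * |t - s| := by
  have hcomp : ‖(R s).comp (R t)‖ ≤ M ^ 2 := by
    calc ‖(R s).comp (R t)‖ ≤ ‖R s‖ * ‖R t‖ := ContinuousLinearMap.opNorm_comp_le _ _
      _ ≤ M * M := by
          have h1 := norm_R_le hA hs
          have h2 := norm_R_le hA ht
          have h0 : (0:ℝ) ≤ ‖R s‖ := norm_nonneg _
          have h0' : (0:ℝ) ≤ ‖R t‖ := norm_nonneg _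
          nlinarith
      _ = M ^ 2 := by ring
  calc ‖R s - R t‖ = ‖(t - s) • ((R s).comp (R t))‖ := by rw [res_id hA hs ht]
    _ ≤ ‖t - s‖ * ‖(R s).comp (R t)‖ := norm_smul_le (t - s) ((R s).comp (R t))
    _ ≤ |t - s| * M ^ 2 := by
        rw [Real.norm_eq_abs]
        exact mul_le_mul_of_nonneg_left hcomp (abs_nonneg _)
    _ = M ^ 2 * |t - s| := mul_comm _ _

lemma continuousAt_R (hA : IsPositive A M R) {s : ℝ} (hs : 0 < s) :
    ContinuousAt R s := by
  rw [ContinuousAt, tendsto_iff_norm_sub_tendsto_zero]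
  have hb : ∀ᶠ t in nhds s, ‖R t - R s‖ ≤ M ^ 2 * |s - t| := by
    filter_upwards [eventually_gt_nhds hs] with t ht
    exact norm_sub hA ht.le hs.le
  refine squeeze_zero' (Filter.Eventually.of_forall fun t => norm_nonneg _) hb ?_
  have : Filter.Tendsto (fun t : ℝ => M ^ 2 * |s - t|) (nhds s) (nhds (M ^ 2 * |s - s|)) := by
    exact (continuous_const.mul ((continuous_const.sub continuous_id).abs)).tendsto s
  simpa using this

lemma continuousOn_R (hA : IsPositive A M R) : ContinuousOn R (Ioi 0) := fun s hs =>
  (continuousAt_R hA hs).continuousWithinAt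

lemma hasDerivAt_R (hA : IsPositive A M R) {s : ℝ} (hs : 0 < s) :
    HasDerivAt R (-((R s).comp (R s))) s := by
  rw [hasDerivAt_iff_tendsto_slope]
  have hcont : Filter.Tendsto (fun t => -((R t).comp (R s)))
      (nhdsWithin s {s}ᶜ) (nhds (-((R s).comp (R s)))) := by
    have h1 : Continuous fun g : X →L[ℂ] X => -(g.comp (R s)) :=
      (((ContinuousLinearMap.compL ℂ X X X).flip (R s)).continuous).neg
    exact (h1.tendsto (R s)).comp ((continuousAt_R hA hs).tendsto.mono_left nhdsWithin_le_nhds)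
  refine hcont.congr' ?_
  have hmem : Ioi (0:ℝ) ∈ nhdsWithin s {s}ᶜ :=
    nhdsWithin_le_nhds (Ioi_mem_nhds hs)
  filter_upwards [hmem, self_mem_nhdsWithin] with t ht hts
  have hne : t ≠ s := hts
  rw [slope_def_module]
  rw [res_id hA ht.le hs.le, smul_smul]
  have hc : (t - s)⁻¹ * (s - t) = -1 := by
    rw [← neg_sub t s, mul_neg, inv_mul_cancel₀ (sub_ne_zero.mpr hne)]
  rw [hc, neg_one_smul]


lemma integrable_aux {α C : ℝ} (hα : α ∈ Ioo (0:ℝ) 1) (hC : 0 ≤ C)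
    {F : ℝ → X →L[ℂ] X} (hcont : ContinuousOn F (Ioi 0))
    (hb : ∀ s : ℝ, 0 < s → (1 + s) * ‖F s‖ ≤ C) :
    IntegrableOn (fun s : ℝ => s ^ (-α) • F s) (Ioi 0) := by
  obtain ⟨hα0, hα1⟩ := hα
  have hb' : ∀ s : ℝ, 0 < s → ‖F s‖ ≤ C / (1 + s) := by
    intro s hs
    rw [le_div_iff₀ (by linarith : (0:ℝ) < 1 + s), mul_comm]
    exact hb s hs
  have hmeas : AEStronglyMeasurable (fun s : ℝ => s ^ (-α) • F s) (volume.restrict (Ioi 0)) := by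
    refine ContinuousOn.aestronglyMeasurable ?_ measurableSet_Ioi
    refine ContinuousOn.smul (f := fun s : ℝ => s ^ (-α)) (g := F) (fun s hs => ?_) hcont
    exact (Real.continuousAt_rpow_const s (-α) (Or.inl (ne_of_gt hs))).continuousWithinAt
  have hmeas1 : AEStronglyMeasurable (fun s : ℝ => s ^ (-α) • F s) (volume.restrict (Ioc 0 1)) :=
    hmeas.mono_measure (Measure.restrict_mono Ioc_subset_Ioi_self le_rfl)
  have hmeas2 : AEStronglyMeasurable (fun s : ℝ => s ^ (-α) • F s) (volume.restrict (Ioi 1)) :=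
    hmeas.mono_measure (Measure.restrict_mono (Ioi_subset_Ioi zero_le_one) le_rfl)
  have part1 : IntegrableOn (fun s : ℝ => s ^ (-α) • F s) (Ioc 0 1) := by
    have i1 : IntegrableOn (fun s : ℝ => s ^ (-α)) (Ioc 0 1) := by
      have h := intervalIntegral.intervalIntegrable_rpow' (a := 0) (b := 1)
        (by linarith : (-1:ℝ) < -α)
      rwa [intervalIntegrable_iff_integrableOn_Ioc_of_le zero_le_one] at h
    refine Integrable.mono' (i1.const_mul C) hmeas1 ?_
    rw [ae_restrict_iff' measurableSet_Ioc]
    refine Filter.Eventually.of_forall fun s hs => ?_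
    obtain ⟨hs0, _⟩ := hs
    have hr : (0:ℝ) ≤ s ^ (-α) := Real.rpow_nonneg hs0.le _
    calc ‖s ^ (-α) • F s‖ ≤ ‖s ^ (-α)‖ * ‖F s‖ := norm_smul_le (s ^ (-α)) (F s)
      _ = s ^ (-α) * ‖F s‖ := by rw [Real.norm_eq_abs, abs_of_nonneg hr]
      _ ≤ s ^ (-α) * C := by
          refine mul_le_mul_of_nonneg_left ?_ hr
          refine (hb' s hs0).trans ?_
          rw [div_le_iff₀ (by linarith : (0:ℝ) < 1 + s)]
          nlinarith
      _ = C * s ^ (-α) := mul_comm _ _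
  have part2 : IntegrableOn (fun s : ℝ => s ^ (-α) • F s) (Ioi 1) := by
    have i2 : IntegrableOn (fun s : ℝ => s ^ (-α - 1)) (Ioi 1) :=
      integrableOn_Ioi_rpow_of_lt (by linarith) zero_lt_one
    refine Integrable.mono' (i2.const_mul C) hmeas2 ?_
    rw [ae_restrict_iff' measurableSet_Ioi]
    refine Filter.Eventually.of_forall fun s hs => ?_
    have hs1 : (1:ℝ) < s := hs
    have hs0 : (0:ℝ) < s := lt_trans zero_lt_one hs1
    have hr : (0:ℝ) ≤ s ^ (-α) := Real.rpow_nonneg hs0.le _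
    have hsplit : s ^ (-α - 1) = s ^ (-α) * s⁻¹ := by
      rw [show -α - 1 = -α + (-1 : ℝ) by ring, Real.rpow_add hs0, Real.rpow_neg_one]
    calc ‖s ^ (-α) • F s‖ ≤ ‖s ^ (-α)‖ * ‖F s‖ := norm_smul_le (s ^ (-α)) (F s)
      _ = s ^ (-α) * ‖F s‖ := by rw [Real.norm_eq_abs, abs_of_nonneg hr]
      _ ≤ s ^ (-α) * (C / (1 + s)) := mul_le_mul_of_nonneg_left (hb' s hs0) hr
      _ ≤ s ^ (-α) * (C / s) := by
          refine mul_le_mul_of_nonneg_left ?_ hr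
          rw [div_le_div_iff₀ (by linarith : (0:ℝ) < 1 + s) hs0]
          nlinarith
      _ = C * s ^ (-α - 1) := by rw [hsplit]; ring
  have := part1.union part2
  rwa [Ioc_union_Ioi_eq_Ioi zero_le_one] at this

end Stmt8Aux

open Stmt8Aux in
theorem stmt8 {X : Type*} [NormedAddCommGroup X] [NormedSpace ℂ X] [CompleteSpace X]
    (M : ℝ) (A : X →ₗ.[ℂ] X) (R : ℝ → X →L[ℂ] X) (hA : IsPositive A M R)
    (α : ℝ) (hα : α ∈ Ioo (0 : ℝ) 1) :
    IntegrableOn (fun s : ℝ => s ^ (-α) • ((R s).comp (R s))) (Ioi 0) ∧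
    (Real.sin (π * α) / π) • ∫ s in Ioi (0 : ℝ), s ^ (-α) • ((R s).comp (R s))
      = α • ((R 0).comp (negPow R α)) := by
  obtain ⟨hα0, hα1⟩ := hα
  have hM : (0:ℝ) < M := lt_of_lt_of_le one_pos hA.one_le
  have hcontR := continuousOn_R hA
  -- integrability of the three integrands
  have intJ : IntegrableOn (fun s : ℝ => s ^ (-α) • ((R s).comp (R s))) (Ioi 0) := by
    refine integrable_aux ⟨hα0, hα1⟩ (by nlinarith : (0:ℝ) ≤ M * M) ?_ ?_
    · exact (isBoundedBilinearMap_comp (𝕜 := ℂ)).continuous.comp_continuousOn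
        (hcontR.prodMk hcontR)
    · intro s hs
      have h1 := hA.bound s hs.le
      have h2 := norm_R_le hA hs.le
      have h3 := ContinuousLinearMap.opNorm_comp_le (R s) (R s)
      have h4 : (0:ℝ) < 1 + s := by linarith
      nlinarith [norm_nonneg (R s), norm_nonneg ((R s).comp (R s))]
  have intK : IntegrableOn (fun s : ℝ => s ^ (-α) • ((R 0).comp (R s))) (Ioi 0) := by
    refine integrable_aux ⟨hα0, hα1⟩ (by nlinarith : (0:ℝ) ≤ M * M) ?_ ?_
    · exact ((ContinuousLinearMap.compL ℂ X X X (R 0)).continuous).comp_continuousOn hcontR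
    · intro s hs
      have h1 := hA.bound s hs.le
      have h2 := norm_R_le hA (le_refl 0)
      have h3 := ContinuousLinearMap.opNorm_comp_le (R 0) (R s)
      have h4 : (0:ℝ) < 1 + s := by linarith
      calc (1 + s) * ‖(R 0).comp (R s)‖ ≤ (1 + s) * (‖R 0‖ * ‖R s‖) :=
            mul_le_mul_of_nonneg_left h3 h4.le
        _ = ‖R 0‖ * ((1 + s) * ‖R s‖) := by ring
        _ ≤ M * M := mul_le_mul h2 h1 (by positivity) hM.le
  have intI1 : IntegrableOn (fun s : ℝ => s ^ (-α) • R s) (Ioi 0) := by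
    refine integrable_aux ⟨hα0, hα1⟩ (by linarith : (0:ℝ) ≤ M) hcontR ?_
    exact fun s hs => hA.bound s hs.le
  refine ⟨intJ, ?_⟩
  -- derivative of the auxiliary function G
  have hderiv : ∀ x ∈ Ioi (0:ℝ), HasDerivAt (fun s : ℝ => s ^ (-α) • (R s - R 0))
      (α • (x ^ (-α) • ((R 0).comp (R x))) - x ^ (-α) • ((R x).comp (R x))) x := by
    intro x hx
    have hx0 : (0:ℝ) < x := hx
    have h1 : HasDerivAt (fun t : ℝ => t ^ (-α)) (-α * x ^ (-α - 1)) x :=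
      Real.hasDerivAt_rpow_const (Or.inl hx0.ne')
    have h2 : HasDerivAt (fun t : ℝ => R t - R 0) (-((R x).comp (R x))) x :=
      (hasDerivAt_R hA hx0).sub_const (R 0)
    have h3 := h1.smul h2
    refine h3.congr_deriv ?_
    have hsub : R x - R 0 = (0 - x) • ((R x).comp (R 0)) := res_id hA hx0.le le_rfl
    have hcomm : (R x).comp (R 0) = (R 0).comp (R x) := comm hA hx0.le le_rfl hx0.ne'
    have hx1 : x ^ (-α) = x ^ (-α - 1) * x := by
      rw [← Real.rpow_add_one hx0.ne' (-α - 1)]; ring_nf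
    rw [hsub, hcomm, hx1]
    module
  -- continuity at 0 from the right
  have hG0 : (0:ℝ) ^ (-α) • (R 0 - R 0) = 0 := by simp
  have hcont0 : ContinuousWithinAt (fun s : ℝ => s ^ (-α) • (R s - R 0)) (Ici 0) 0 := by
    rw [ContinuousWithinAt, hG0]
    refine squeeze_zero_norm' (a := fun t : ℝ => M ^ 2 * t ^ ((1:ℝ) - α)) ?_ ?_
    · filter_upwards [self_mem_nhdsWithin] with t ht
      have ht' : (0:ℝ) ≤ t := ht
      rcases eq_or_lt_of_le ht' with h | h
      · rw [← h]
        simp [Real.zero_rpow (by linarith : (1:ℝ) - α ≠ 0)]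
      · have hr : (0:ℝ) ≤ t ^ (-α) := Real.rpow_nonneg ht' _
        have hts : t ^ (-α) * t = t ^ ((1:ℝ) - α) := by
          rw [show (1:ℝ) - α = -α + 1 by ring, Real.rpow_add_one h.ne' (-α)]
        calc ‖t ^ (-α) • (R t - R 0)‖ ≤ ‖t ^ (-α)‖ * ‖R t - R 0‖ :=
              norm_smul_le (t ^ (-α)) (R t - R 0)
          _ = t ^ (-α) * ‖R t - R 0‖ := by rw [Real.norm_eq_abs, abs_of_nonneg hr]
          _ ≤ t ^ (-α) * (M ^ 2 * |0 - t|) :=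
              mul_le_mul_of_nonneg_left (norm_sub hA h.le le_rfl) hr
          _ = M ^ 2 * (t ^ (-α) * t) := by
              rw [abs_of_nonpos (by linarith : 0 - t ≤ 0)]; ring
          _ = M ^ 2 * t ^ ((1:ℝ) - α) := by rw [hts]
    · have hc : ContinuousWithinAt (fun t : ℝ => M ^ 2 * t ^ ((1:ℝ) - α)) (Ici 0) 0 :=
        continuousWithinAt_const.mul
          ((Real.continuousAt_rpow_const 0 ((1:ℝ) - α) (Or.inr (by linarith))).continuousWithinAt)
      have h0 : M ^ 2 * (0:ℝ) ^ ((1:ℝ) - α) = 0 := by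
        rw [Real.zero_rpow (by linarith : (1:ℝ) - α ≠ 0), mul_zero]
      rw [ContinuousWithinAt, h0] at hc
      exact hc
  -- limit at infinity
  have htop : Filter.Tendsto (fun s : ℝ => s ^ (-α) • (R s - R 0)) Filter.atTop (nhds 0) := by
    refine squeeze_zero_norm' (a := fun t : ℝ => 2 * M * t ^ (-α)) ?_ ?_
    · filter_upwards [Filter.eventually_ge_atTop (1:ℝ)] with t ht
      have ht0 : (0:ℝ) < t := lt_of_lt_of_le zero_lt_one ht
      have hr : (0:ℝ) ≤ t ^ (-α) := Real.rpow_nonneg ht0.le _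
      calc ‖t ^ (-α) • (R t - R 0)‖ ≤ ‖t ^ (-α)‖ * ‖R t - R 0‖ :=
            norm_smul_le (t ^ (-α)) (R t - R 0)
        _ = t ^ (-α) * ‖R t - R 0‖ := by rw [Real.norm_eq_abs, abs_of_nonneg hr]
        _ ≤ t ^ (-α) * (2 * M) := by
            refine mul_le_mul_of_nonneg_left ?_ hr
            refine (norm_sub_le _ _).trans ?_
            have := norm_R_le hA ht0.le
            have := norm_R_le hA (le_refl 0)
            linarith
        _ = 2 * M * t ^ (-α) := mul_comm _ _
    · simpa using (tendsto_rpow_neg_atTop hα0).const_mul (2 * M)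
  -- the derivative is integrable
  have intD : IntegrableOn (fun x : ℝ =>
      α • (x ^ (-α) • ((R 0).comp (R x))) - x ^ (-α) • ((R x).comp (R x))) (Ioi 0) := by
    exact (intK.smul α).sub intJ
  -- FTC on (0, ∞)
  have key := integral_Ioi_of_hasDerivAt_of_tendsto hcont0 hderiv intD htop
  rw [hG0, sub_zero] at key
  have hsplit : (∫ x in Ioi (0:ℝ),
        (α • (x ^ (-α) • ((R 0).comp (R x))) - x ^ (-α) • ((R x).comp (R x))))
      = (∫ x in Ioi (0:ℝ), α • (x ^ (-α) • ((R 0).comp (R x))))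
        - ∫ x in Ioi (0:ℝ), x ^ (-α) • ((R x).comp (R x)) :=
    integral_sub (intK.smul α) intJ
  have hsmul : (∫ x in Ioi (0:ℝ), α • (x ^ (-α) • ((R 0).comp (R x))))
      = α • ∫ x in Ioi (0:ℝ), x ^ (-α) • ((R 0).comp (R x)) :=
    integral_smul α _
  have hI2 : (∫ x in Ioi (0:ℝ), x ^ (-α) • ((R x).comp (R x)))
      = α • ∫ x in Ioi (0:ℝ), x ^ (-α) • ((R 0).comp (R x)) := by
    rw [hsplit, hsmul] at key
    exact (sub_eq_zero.mp key).symm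
  have hcompint : (∫ x in Ioi (0:ℝ), x ^ (-α) • ((R 0).comp (R x)))
      = (R 0).comp (∫ x in Ioi (0:ℝ), x ^ (-α) • R x) := by
    have heq : ∀ x : ℝ, x ^ (-α) • ((R 0).comp (R x))
        = (ContinuousLinearMap.compL ℂ X X X (R 0)) (x ^ (-α) • R x) := by
      intro x
      rw [ContinuousLinearMap.map_smul_of_tower, ContinuousLinearMap.compL_apply]
    simp only [heq]
    rw [ContinuousLinearMap.integral_comp_comm _ intI1]
    rw [ContinuousLinearMap.compL_apply]
  rw [hI2, hcompint]
  unfold negPow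
  have hcomp_smul : (R 0).comp ((Real.sin (π * α) / π) • ∫ s in Ioi (0:ℝ), s ^ (-α) • R s)
      = (Real.sin (π * α) / π) • (R 0).comp (∫ s in Ioi (0:ℝ), s ^ (-α) • R s) := by
    rw [← ContinuousLinearMap.compL_apply, ContinuousLinearMap.map_smul_of_tower,
      ContinuousLinearMap.compL_apply]
  rw [hcomp_smul]
  rw [smul_comm]
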